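/- arXiv:1509.08760 — 2 statements merged into one kernel-verified Lean document; each statement's English description precedes it below -/
import Mathlib

section
/- Every element P of FSh₂(N) satisfies the reflection relation P(X,Y) = P(−Y,−X). -/
noncomputable section

open MvPolynomial

/-- The polynomial ring `ℚ[X,Y]`, with `X = X 0` and `Y = X 1`. -/
abbrev R2 : Type := MvPolynomial (Fin 2) ℚ

/-- The field of rational functions `ℚ(X,Y)`. -/
abbrev K2 : Type := FractionRing R2

/-- The substitution `(X, Y) ↦ (X + Y, -Y)` on polynomials. -/
def fayA : R2 →ₐ[ℚ] R2 := aeval ![X 0 + X 1, -X 1]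

/-- The substitution `(X, Y) ↦ (-X - Y, X)` on polynomials. -/
def rotA : R2 →ₐ[ℚ] R2 := aeval ![-X 0 - X 1, X 0]

/-- The substitution `(X, Y) ↦ (Y, X)` on polynomials. -/
def swapA : R2 →ₐ[ℚ] R2 := aeval ![X 1, X 0]

lemma fayA_invol : fayA.comp fayA = AlgHom.id ℚ R2 := by
  apply algHom_ext
  intro i
  fin_cases i <;> simp [fayA]

lemma rotA_cube : rotA.comp (rotA.comp rotA) = AlgHom.id ℚ R2 := by
  apply algHom_ext
  intro i
  fin_cases i <;> simp [rotA]

lemma swapA_invol : swapA.comp swapA = AlgHom.id ℚ R2 := by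
  apply algHom_ext
  intro i
  fin_cases i <;> simp [swapA]

lemma fayA_inj : Function.Injective fayA :=
  Function.LeftInverse.injective (g := fayA) fun x => by
    simpa using DFunLike.congr_fun fayA_invol x

lemma rotA_inj : Function.Injective rotA :=
  Function.LeftInverse.injective (g := rotA.comp rotA) fun x => by
    simpa using DFunLike.congr_fun rotA_cube x

lemma swapA_inj : Function.Injective swapA :=
  Function.LeftInverse.injective (g := swapA) fun x => by
    simpa using DFunLike.congr_fun swapA_invol x

/-- Lift an injective substitution on `ℚ[X,Y]` to the fraction field `ℚ(X,Y)`. -/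
def liftK (φ : R2 →ₐ[ℚ] R2) (hφ : Function.Injective φ) : K2 →+* K2 :=
  IsFractionRing.lift (g := (algebraMap R2 K2).comp φ.toRingHom)
    (fun _ _ h => hφ (IsFractionRing.injective R2 K2 h))

/-- `P(X,Y) ↦ P(X+Y, -Y)` as a `ℚ`-linear endomorphism of `ℚ(X,Y)`. -/
def fayL : K2 →ₗ[ℚ] K2 := (liftK fayA fayA_inj).toAddMonoidHom.toRatLinearMap

/-- `P(X,Y) ↦ P(-X-Y, X)` as a `ℚ`-linear endomorphism of `ℚ(X,Y)`. -/
def rotL : K2 →ₗ[ℚ] K2 := (liftK rotA rotA_inj).toAddMonoidHom.toRatLinearMap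

/-- `P(X,Y) ↦ P(Y, X)` as a `ℚ`-linear endomorphism of `ℚ(X,Y)`. -/
def swapL : K2 →ₗ[ℚ] K2 := (liftK swapA swapA_inj).toAddMonoidHom.toRatLinearMap

/-- The inclusion `ℚ[X,Y] → ℚ(X,Y)` as a `ℚ`-linear map. -/
def algL : R2 →ₗ[ℚ] K2 := (IsScalarTower.toAlgHom ℚ R2 K2).toRingHom.toAddMonoidHom.toRatLinearMap

/-- The element `X·Y ∈ ℚ(X,Y)`. -/
def xyK : K2 := algebraMap R2 K2 (X 0 * X 1)

/-- The length-two Fay-shuffle space `FSh₂(N)`: rational functions `P(X,Y)`,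
homogeneous of degree `N - 2` with at most simple poles along `X = 0` and `Y = 0`
and no other poles (equivalently, `X·Y·P` is a homogeneous polynomial of degree `N`),
satisfying the Fay relation `P(X,Y) + P(X+Y,-Y) + P(-X-Y,X) = 0` and the shuffle
relation `P(X,Y) + P(Y,X) = 0`. -/
def FSh (N : ℕ) : Submodule ℚ K2 :=
  (Submodule.map algL (homogeneousSubmodule (Fin 2) ℚ N)).comap (LinearMap.mulLeft ℚ xyK)
    ⊓ LinearMap.ker (LinearMap.id + fayL + rotL)
    ⊓ LinearMap.ker (LinearMap.id + swapL)


/-- The substitution `(X, Y) ↦ (-Y, -X)` on polynomials. -/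
def reflA : R2 →ₐ[ℚ] R2 := aeval ![-X 1, -X 0]

lemma reflA_invol : reflA.comp reflA = AlgHom.id ℚ R2 := by
  apply algHom_ext
  intro i
  fin_cases i <;> simp [reflA]

lemma reflA_inj : Function.Injective reflA :=
  Function.LeftInverse.injective (g := reflA) fun x => by
    simpa using DFunLike.congr_fun reflA_invol x

/-- `P(X,Y) ↦ P(-Y, -X)` as a `ℚ`-linear endomorphism of `ℚ(X,Y)`. -/
def reflL : K2 →ₗ[ℚ] K2 := (liftK reflA reflA_inj).toAddMonoidHom.toRatLinearMap

/- ### Auxiliary lemmas -/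

/-- The negation substitution `(X,Y) ↦ (-X,-Y)`. -/
def negA : R2 →ₐ[ℚ] R2 := aeval ![-X 0, -X 1]

lemma negA_invol : negA.comp negA = AlgHom.id ℚ R2 := by
  apply algHom_ext
  intro i
  fin_cases i <;> simp [negA]

lemma negA_inj : Function.Injective negA :=
  Function.LeftInverse.injective (g := negA) fun x => by
    simpa using DFunLike.congr_fun negA_invol x

lemma liftK_algebraMap (φ : R2 →ₐ[ℚ] R2) (hφ : Function.Injective φ) (p : R2) :
    liftK φ hφ (algebraMap R2 K2 p) = algebraMap R2 K2 (φ p) := by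
  simp [liftK]

lemma liftK_comp (φ ψ : R2 →ₐ[ℚ] R2) (hφ : Function.Injective φ)
    (hψ : Function.Injective ψ) (hc : Function.Injective (φ.comp ψ)) (x : K2) :
    liftK φ hφ (liftK ψ hψ x) = liftK (φ.comp ψ) hc x := by
  have h : (liftK φ hφ).comp (liftK ψ hψ) = liftK (φ.comp ψ) hc := by
    apply IsLocalization.ringHom_ext (nonZeroDivisors R2)
    refine RingHom.ext fun p => ?_
    simp [RingHom.comp_apply, liftK_algebraMap]
  exact DFunLike.congr_fun h x

lemma liftK_id (h : Function.Injective (AlgHom.id ℚ R2)) (x : K2) :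
    liftK (AlgHom.id ℚ R2) h x = x := by
  have h' : liftK (AlgHom.id ℚ R2) h = RingHom.id K2 := by
    apply IsLocalization.ringHom_ext (nonZeroDivisors R2)
    refine RingHom.ext fun p => ?_
    simp [RingHom.comp_apply, liftK_algebraMap]
  exact DFunLike.congr_fun h' x

lemma liftK_congr {φ ψ : R2 →ₐ[ℚ] R2} (h : φ = ψ) (hφ : Function.Injective φ)
    (hψ : Function.Injective ψ) (x : K2) : liftK φ hφ x = liftK ψ hψ x := by
  subst h; rfl

lemma rotA_comp_fayA : rotA.comp fayA = reflA := by
  apply algHom_ext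
  intro i
  fin_cases i <;> simp [rotA, fayA, reflA] <;> ring

lemma negA_comp_swapA : negA.comp swapA = reflA := by
  apply algHom_ext
  intro i
  fin_cases i <;> simp [negA, swapA, reflA]

lemma rotA_cube' : (rotA.comp rotA).comp rotA = AlgHom.id ℚ R2 := by
  apply algHom_ext
  intro i
  fin_cases i <;> simp [rotA] <;> ring

/-- Scaling a homogeneous polynomial by `-1`. -/
lemma negA_homogeneous {N : ℕ} {Q : R2} (h : Q.IsHomogeneous N) :
    negA Q = (-1 : R2) ^ N * Q := by
  conv_lhs => rw [Q.as_sum]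
  conv_rhs => rw [Q.as_sum]
  rw [map_sum, Finset.mul_sum]
  refine Finset.sum_congr rfl fun v hv => ?_
  have hdeg : v.degree = N := by
    have := h (mem_support_iff.mp hv)
    rw [Finsupp.degree_eq_weight_one]; exact this
  have hvec : ∀ i : Fin 2, (![-X 0, -X 1] : Fin 2 → R2) i = -X i := by
    intro i; fin_cases i <;> rfl
  rw [negA, aeval_monomial]
  have hprod : (v.prod fun i k => ((![-X 0, -X 1] : Fin 2 → R2) i) ^ k)
      = (-1 : R2) ^ N * v.prod fun i k => (X i : R2) ^ k := by
    rw [← hdeg, Finsupp.degree_apply]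
    rw [Finsupp.prod, Finsupp.prod, ← Finset.prod_pow_eq_pow_sum, ← Finset.prod_mul_distrib]
    refine Finset.prod_congr rfl fun i _ => ?_
    rw [hvec i, neg_pow]
  rw [hprod, monomial_eq, algebraMap_eq]
  ring

/-- Every element `P` of the Fay-shuffle space `FSh₂(N)` satisfies the reflection
relation `P(X,Y) = P(-Y,-X)`. -/
theorem FSh_reflection (N : ℕ) (P : K2) (hP : P ∈ FSh N) : P = reflL P := by
  rw [FSh, Submodule.mem_inf, Submodule.mem_inf] at hP
  obtain ⟨⟨h1, h2⟩, h3⟩ := hP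
  rw [Submodule.mem_comap, Submodule.mem_map] at h1
  obtain ⟨Q, hQ, hQP⟩ := h1
  rw [mem_homogeneousSubmodule] at hQ
  rw [LinearMap.mem_ker] at h2 h3
  have hfay : P + liftK fayA fayA_inj P + liftK rotA rotA_inj P = 0 := by
    simpa [fayL, rotL] using h2
  have hswap : liftK swapA swapA_inj P = -P := by
    have h3' : P + liftK swapA swapA_inj P = 0 := by simpa [swapL] using h3
    linear_combination h3'
  have hxyP : algebraMap R2 K2 Q = xyK * P := by
    simpa [algL] using hQP
  -- the negation operator acts on P by (-1)^N
  have hnxy : liftK negA negA_inj xyK = xyK := by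
    rw [xyK, liftK_algebraMap]
    congr 1
    simp [negA]
  have hxy0 : xyK ≠ 0 := by
    rw [xyK]
    intro h
    have := IsFractionRing.injective R2 K2 (h.trans (map_zero _).symm)
    exact mul_ne_zero (X_ne_zero 0) (X_ne_zero 1) this
  have hnegP : liftK negA negA_inj P = (-1 : K2) ^ N * P := by
    apply mul_left_cancel₀ hxy0
    have e1 : liftK negA negA_inj (algebraMap R2 K2 Q) = (-1 : K2) ^ N * algebraMap R2 K2 Q := by
      rw [liftK_algebraMap, negA_homogeneous hQ, map_mul, map_pow, map_neg, map_one]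
    calc xyK * liftK negA negA_inj P
        = liftK negA negA_inj (xyK * P) := by rw [map_mul, hnxy]
      _ = (-1 : K2) ^ N * algebraMap R2 K2 Q := by rw [← hxyP, e1]
      _ = xyK * ((-1 : K2) ^ N * P) := by rw [hxyP]; ring
  -- reflection via negation and swap
  have hrefl1 : reflL P = liftK negA negA_inj (liftK swapA swapA_inj P) := by
    rw [liftK_comp negA swapA negA_inj swapA_inj
      (by rw [negA_comp_swapA]; exact reflA_inj)]
    exact (liftK_congr negA_comp_swapA _ reflA_inj P).symm
  -- reflection via rot ∘ fay
  have hrefl2 : reflL P = liftK rotA rotA_inj (liftK fayA fayA_inj P) := by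
    rw [liftK_comp rotA fayA rotA_inj fayA_inj
      (by rw [rotA_comp_fayA]; exact reflA_inj)]
    exact (liftK_congr rotA_comp_fayA _ reflA_inj P).symm
  rcases Nat.even_or_odd N with hN | hN
  · -- even case : refl P = -P, and the Fay relation forces P = 0
    have hpow : (-1 : K2) ^ N = 1 := hN.neg_one_pow
    have hA : reflL P = -P := by
      rw [hrefl1, hswap, map_neg, hnegP, hpow, one_mul]
    set r1 := liftK rotA rotA_inj P with hr1
    set r2 := liftK rotA rotA_inj r1 with hr2
    have hri2 : Function.Injective (rotA.comp rotA) := fun a b h => rotA_inj (rotA_inj h)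
    have hri3 : Function.Injective ((rotA.comp rotA).comp rotA) :=
      fun a b h => rotA_inj (hri2 h)
    have hcube : liftK rotA rotA_inj r2 = P := by
      rw [hr2, hr1, liftK_comp rotA rotA rotA_inj rotA_inj hri2,
        liftK_comp (rotA.comp rotA) rotA hri2 rotA_inj hri3,
        liftK_congr rotA_cube' hri3 (fun a b h => by simpa using h)]
      exact liftK_id _ P
    have E1 : -P = -r1 - r2 := by
      have hf : liftK fayA fayA_inj P = -P - r1 := by
        rw [hr1]; linear_combination hfay
      rw [← hA, hrefl2, hf, map_sub, map_neg, ← hr1, ← hr2]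
    have E2 : -r1 = -r2 - P := by
      have h := congrArg (liftK rotA rotA_inj) E1
      rwa [map_neg, map_sub, map_neg, ← hr2, hcube] at h
    have h5 : P = r1 := by
      linear_combination (-(1:K2)/2) * E1 + ((1:K2)/2) * E2
    have h6 : r2 = P := by
      rw [hr2, ← h5, ← hr1, ← h5]
    have h7 : P = 0 := by
      linear_combination E1 + h5 - h6
    rw [hA, h7]; ring
  · -- odd case : refl P = P directly from shuffle and parity
    have hpow : (-1 : K2) ^ N = -1 := hN.neg_one_pow
    rw [hrefl1, hswap, map_neg, hnegP, hpow]
    ring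

end
end

section
/- For every odd integer N ≥ 1, the ℚ-vector space FSh₂(N) is the internal direct sum of its polynomial part FSh₂(N)^{pol} := FSh₂(N) ∩ ℚ[X,Y] and the one-dimensional subspace spanned by P̃(X,Y) = X^{N−1}/Y − Y^{N−1}/X − (X^{N−1} − Y^{N−1})/(X+Y). In particular, dim_ℚ FSh₂(N) = dim_ℚ FSh₂(N)^{pol} + 1. -/
noncomputable section

open MvPolynomial

/-- The element `P̃(X,Y) = X^(N-1)/Y - Y^(N-1)/X - (X^(N-1) - Y^(N-1))/(X+Y)` of `ℚ(X,Y)`. -/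
def Ptil (N : ℕ) : K2 :=
  (algebraMap R2 K2 (X 0)) ^ (N - 1) / algebraMap R2 K2 (X 1)
    - (algebraMap R2 K2 (X 1)) ^ (N - 1) / algebraMap R2 K2 (X 0)
    - ((algebraMap R2 K2 (X 0)) ^ (N - 1) - (algebraMap R2 K2 (X 1)) ^ (N - 1))
        / (algebraMap R2 K2 (X 0) + algebraMap R2 K2 (X 1))

/-- The polynomial part of the Fay-shuffle space: `FSh₂(N)^pol = FSh₂(N) ∩ ℚ[X,Y]`. -/
def FShPol (N : ℕ) : Submodule ℚ K2 := FSh N ⊓ LinearMap.range algL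

namespace FShAux

open Finset

lemma algL_apply (r : R2) : algL r = algebraMap R2 K2 r := rfl

lemma algL_inj : Function.Injective algL := IsFractionRing.injective R2 K2

lemma liftK_alg (φ : R2 →ₐ[ℚ] R2) (hφ : Function.Injective φ) (r : R2) :
    liftK φ hφ (algebraMap R2 K2 r) = algebraMap R2 K2 (φ r) :=
  IsFractionRing.lift_algebraMap _ _

lemma fayL_apply (z : K2) : fayL z = liftK fayA fayA_inj z := rfl
lemma rotL_apply (z : K2) : rotL z = liftK rotA rotA_inj z := rfl
lemma swapL_apply (z : K2) : swapL z = liftK swapA swapA_inj z := rfl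

lemma fayA_X0 : fayA (X 0) = X 0 + X 1 := by simp [fayA]
lemma fayA_X1 : fayA (X 1) = - X 1 := by simp [fayA]
lemma rotA_X0 : rotA (X 0) = - X 0 - X 1 := by simp [rotA]
lemma rotA_X1 : rotA (X 1) = X 0 := by simp [rotA]
lemma swapA_X0 : swapA (X 0) = X 1 := by simp [swapA]
lemma swapA_X1 : swapA (X 1) = X 0 := by simp [swapA]

noncomputable def xK : K2 := algebraMap R2 K2 (X 0)
noncomputable def yK : K2 := algebraMap R2 K2 (X 1)

lemma xK_ne : xK ≠ 0 := by
  simp only [xK, ne_eq, IsFractionRing.to_map_eq_zero_iff]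
  exact MvPolynomial.X_ne_zero 0

lemma yK_ne : yK ≠ 0 := by
  simp only [yK, ne_eq, IsFractionRing.to_map_eq_zero_iff]
  exact MvPolynomial.X_ne_zero 1

lemma xyadd_ne : xK + yK ≠ 0 := by
  rw [xK, yK, ← map_add]
  simp only [ne_eq, IsFractionRing.to_map_eq_zero_iff]
  intro h
  have := congrArg (MvPolynomial.eval fun _ => (1:ℚ)) h
  simp at this

noncomputable def hpol (k : ℕ) : R2 :=
  ∑ i ∈ Finset.range (2*k), X 0 ^ i * (- X 1) ^ (2*k - 1 - i)

lemma hpol_mul (k : ℕ) : hpol k * (X 0 + X 1) = X 0 ^ (2*k) - X 1 ^ (2*k) := by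
  have h := geom_sum₂_mul (X 0 : R2) (-X 1) (2*k)
  rw [sub_neg_eq_add] at h
  rw [hpol, h, Even.neg_pow (even_two_mul k)]

lemma hpol_hom (k : ℕ) : (hpol k).IsHomogeneous (2*k - 1) := by
  apply MvPolynomial.IsHomogeneous.sum
  intro i hi
  rw [Finset.mem_range] at hi
  have h0 : (X (R := ℚ) (0 : Fin 2) ^ i).IsHomogeneous i := isHomogeneous_X_pow _ _
  have h1 : ((- X (R := ℚ) (1 : Fin 2)) ^ (2*k - 1 - i)).IsHomogeneous (2*k - 1 - i) := by
    have := (isHomogeneous_X ℚ (1 : Fin 2)).neg.pow (2*k - 1 - i)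
    simpa using this
  have := h0.mul h1
  convert this using 1
  omega

noncomputable def Qt (k : ℕ) : R2 :=
  X 0 ^ (2*k+1) - X 1 ^ (2*k+1) - X 0 * X 1 * hpol k

lemma Qt_hom (k : ℕ) : (Qt k).IsHomogeneous (2*k+1) := by
  refine MvPolynomial.IsHomogeneous.sub (MvPolynomial.IsHomogeneous.sub
    (isHomogeneous_X_pow _ _) (isHomogeneous_X_pow _ _)) ?_
  rcases k with _ | k
  · simp [hpol]
    exact isHomogeneous_zero _ _ _
  · have hh := ((isHomogeneous_X ℚ (0 : Fin 2)).mul (isHomogeneous_X ℚ (1 : Fin 2))).mul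
      (hpol_hom (k+1))
    rw [show 2 * (k + 1) + 1 = 1 + 1 + (2 * (k + 1) - 1) by omega]
    exact hh

-- coefficients
lemma coeff_X1_mul_eq_zero {r : R2} {d : Fin 2 →₀ ℕ} (hd : d 1 = 0) :
    MvPolynomial.coeff d (X 1 * r) = 0 := by
  rw [MvPolynomial.coeff_X_mul' d 1 r]
  simp [Finsupp.mem_support_iff, hd]

lemma coeff_X0_mul_eq_zero {r : R2} {d : Fin 2 →₀ ℕ} (hd : d 0 = 0) :
    MvPolynomial.coeff d (X 0 * r) = 0 := by
  rw [MvPolynomial.coeff_X_mul' d 0 r]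
  simp [Finsupp.mem_support_iff, hd]

lemma single01 {N : ℕ} (hN : N ≠ 0) :
    (Finsupp.single (0 : Fin 2) N : Fin 2 →₀ ℕ) ≠ Finsupp.single 1 N := by
  intro h
  have := congrArg (fun f => f (0 : Fin 2)) h
  simp [Finsupp.single_apply] at this
  exact hN this

lemma coeff_Qt_0 (k : ℕ) :
    MvPolynomial.coeff (Finsupp.single (0 : Fin 2) (2*k+1)) (Qt k) = 1 := by
  rw [Qt]
  simp only [MvPolynomial.coeff_sub]
  rw [MvPolynomial.coeff_X_pow, MvPolynomial.coeff_X_pow]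
  rw [if_pos rfl, if_neg (Ne.symm (single01 (by omega)))]
  have : (X (R:=ℚ) (0:Fin 2)) * X 1 * hpol k = X 1 * (X 0 * hpol k) := by ring
  rw [this, coeff_X1_mul_eq_zero (by simp [Finsupp.single_apply])]
  norm_num

lemma coeff_Qt_1 (k : ℕ) :
    MvPolynomial.coeff (Finsupp.single (1 : Fin 2) (2*k+1)) (Qt k) = -1 := by
  rw [Qt]
  simp only [MvPolynomial.coeff_sub]
  rw [MvPolynomial.coeff_X_pow, MvPolynomial.coeff_X_pow]
  rw [if_neg (single01 (by omega)), if_pos rfl]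
  have : (X (R:=ℚ) (0:Fin 2)) * X 1 * hpol k = X 0 * (X 1 * hpol k) := by ring
  rw [this, coeff_X0_mul_eq_zero (by simp [Finsupp.single_apply])]
  norm_num

-- degree of a Fin 2 finsupp
lemma degree_fin2 (d : Fin 2 →₀ ℕ) : d.degree = d 0 + d 1 := by
  rw [Finsupp.degree_apply]
  rw [Finset.sum_subset (Finset.subset_univ d.support)]
  · exact Fin.sum_univ_two d
  · intro i _ hi
    simpa using (Finsupp.notMem_support_iff.mp hi)

lemma eq_single0 {d : Fin 2 →₀ ℕ} {N : ℕ} (h : d 0 + d 1 = N) (h1 : d 1 = 0) :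
    d = Finsupp.single (0 : Fin 2) N := by
  ext i
  fin_cases i <;> simp [Finsupp.single_apply] <;> omega

lemma eq_single1 {d : Fin 2 →₀ ℕ} {N : ℕ} (h : d 0 + d 1 = N) (h0 : d 0 = 0) :
    d = Finsupp.single (1 : Fin 2) N := by
  ext i
  fin_cases i <;> simp [Finsupp.single_apply] <;> omega

lemma dvd_of_homog {q : R2} {N : ℕ} (hq : q.IsHomogeneous N)
    (h0 : MvPolynomial.coeff (Finsupp.single 0 N) q = 0)
    (h1 : MvPolynomial.coeff (Finsupp.single 1 N) q = 0) :
    (X (R:=ℚ) (0:Fin 2)) * X 1 ∣ q := by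
  conv_rhs => rw [← q.support_sum_monomial_coeff]
  apply Finset.dvd_sum
  intro d hd
  have hcd : MvPolynomial.coeff d q ≠ 0 := MvPolynomial.mem_support_iff.mp hd
  have hdeg : d 0 + d 1 = N := by
    have := hq.coeff_eq_zero (d := d)
    by_contra hne
    exact hcd (this (by rw [degree_fin2]; exact hne))
  have hd0 : d 0 ≠ 0 := fun h => hcd (by rw [eq_single1 hdeg h]; exact h1)
  have hd1 : d 1 ≠ 0 := fun h => hcd (by rw [eq_single0 hdeg h]; exact h0)
  refine ⟨MvPolynomial.monomial (d - (Finsupp.single 0 1 + Finsupp.single 1 1))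
    (MvPolynomial.coeff d q), ?_⟩
  have key : Finsupp.single (0 : Fin 2) 1 + Finsupp.single 1 1
      + (d - (Finsupp.single 0 1 + Finsupp.single 1 1)) = d := by
    apply Finsupp.ext
    intro i
    simp only [Finsupp.add_apply, Finsupp.tsub_apply, Finsupp.single_apply]
    fin_cases i <;> simp <;> omega
  rw [MvPolynomial.X, MvPolynomial.X, MvPolynomial.monomial_mul, MvPolynomial.monomial_mul]
  rw [one_mul, one_mul, key]
lemma Ptil_eq (k : ℕ) :
    Ptil (2*k+1) = xK ^ (2*k) / yK - yK ^ (2*k) / xK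
      - (xK ^ (2*k) - yK ^ (2*k)) / (xK + yK) := by
  rw [Ptil]
  norm_num [xK, yK]

lemma xy_Ptil (k : ℕ) : xyK * Ptil (2*k+1) = algebraMap R2 K2 (Qt k) := by
  have hmul : algebraMap R2 K2 (hpol k) * (xK + yK) = xK ^ (2*k) - yK ^ (2*k) := by
    rw [xK, yK, ← map_add, ← map_mul, hpol_mul, map_sub, map_pow, map_pow]
  have hxy : xyK = xK * yK := by rw [xyK, map_mul]; rfl
  rw [Ptil_eq, Qt, hxy]
  rw [map_sub, map_sub, map_pow, map_pow, map_mul, map_mul]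
  rw [show (algebraMap R2 K2) (X 0) = xK from rfl, show (algebraMap R2 K2) (X 1) = yK from rfl]
  have hp : algebraMap R2 K2 (hpol k) = (xK ^ (2*k) - yK ^ (2*k)) / (xK + yK) := by
    rw [eq_div_iff xyadd_ne]; exact hmul
  rw [hp]
  field_simp [xK_ne, yK_ne, xyadd_ne]
  ring
lemma fayL_Ptil (k : ℕ) :
    fayL (Ptil (2*k+1)) = -((xK + yK) ^ (2*k) / yK) - yK ^ (2*k) / (xK + yK)
      - ((xK + yK) ^ (2*k) - yK ^ (2*k)) / xK := by
  rw [Ptil_eq, fayL_apply]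
  simp only [map_sub, map_div₀, map_pow, map_add, xK, yK, liftK_alg, fayA_X0, fayA_X1,
    map_neg]
  rw [Even.neg_pow (even_two_mul k)]
  have e1 : algebraMap R2 K2 (X 0) + algebraMap R2 K2 (X 1) + -algebraMap R2 K2 (X 1)
      = algebraMap R2 K2 (X 0) := by ring
  rw [e1, div_neg]

lemma rotL_Ptil (k : ℕ) :
    rotL (Ptil (2*k+1)) = (xK + yK) ^ (2*k) / xK + xK ^ (2*k) / (xK + yK)
      + ((xK + yK) ^ (2*k) - xK ^ (2*k)) / yK := by
  rw [Ptil_eq, rotL_apply]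
  simp only [map_sub, map_div₀, map_pow, map_add, xK, yK, liftK_alg, rotA_X0, rotA_X1,
    map_neg]
  have e0 : -algebraMap R2 K2 (X 0) - algebraMap R2 K2 (X 1)
      = -(algebraMap R2 K2 (X 0) + algebraMap R2 K2 (X 1)) := by ring
  rw [e0, Even.neg_pow (even_two_mul k)]
  have e1 : -(algebraMap R2 K2 (X 0) + algebraMap R2 K2 (X 1)) + algebraMap R2 K2 (X 0)
      = -(algebraMap R2 K2 (X 1)) := by ring
  rw [e1, div_neg, div_neg]
  ring

lemma swapL_Ptil (k : ℕ) : swapL (Ptil (2*k+1)) = - Ptil (2*k+1) := by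
  rw [Ptil_eq, swapL_apply]
  simp only [map_sub, map_div₀, map_pow, map_add, xK, yK, liftK_alg, swapA_X0, swapA_X1]
  rw [show algebraMap R2 K2 (X 1) + algebraMap R2 K2 (X 0)
      = algebraMap R2 K2 (X 0) + algebraMap R2 K2 (X 1) from add_comm _ _]
  ring

lemma Ptil_fay (k : ℕ) :
    Ptil (2*k+1) + fayL (Ptil (2*k+1)) + rotL (Ptil (2*k+1)) = 0 := by
  rw [fayL_Ptil, rotL_Ptil, Ptil_eq]
  field_simp
  ring
lemma ker_fay_iff (z : K2) :
    z ∈ LinearMap.ker (LinearMap.id + fayL + rotL) ↔ z + fayL z + rotL z = 0 := by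
  rw [LinearMap.mem_ker]
  simp [LinearMap.add_apply]

lemma ker_swap_iff (z : K2) :
    z ∈ LinearMap.ker (LinearMap.id + swapL) ↔ z + swapL z = 0 := by
  rw [LinearMap.mem_ker]
  simp [LinearMap.add_apply]

lemma Ptil_mem (k : ℕ) : Ptil (2*k+1) ∈ FSh (2*k+1) := by
  rw [FSh, Submodule.mem_inf, Submodule.mem_inf]
  refine ⟨⟨?_, ?_⟩, ?_⟩
  · rw [Submodule.mem_comap, LinearMap.mulLeft_apply]
    exact ⟨Qt k, Qt_hom k, (xy_Ptil k).symm⟩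
  · rw [ker_fay_iff]; exact Ptil_fay k
  · rw [ker_swap_iff, swapL_Ptil]; ring

lemma Ptil_ne (k : ℕ) : Ptil (2*k+1) ≠ 0 := by
  intro h
  have h2 : algebraMap R2 K2 (Qt k) = 0 := by rw [← xy_Ptil, h, mul_zero]
  rw [IsFractionRing.to_map_eq_zero_iff] at h2
  have := coeff_Qt_0 k
  rw [h2] at this
  simp at this

lemma swapA_rename (q : R2) : swapA q = MvPolynomial.rename (Equiv.swap (0 : Fin 2) 1) q := by
  have : swapA = (MvPolynomial.rename (Equiv.swap (0 : Fin 2) 1)).restrictScalars ℚ := by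
    apply algHom_ext
    intro i
    fin_cases i <;> simp [swapA, MvPolynomial.rename_X]
  rw [this]; rfl

lemma swapL_xyK : swapL xyK = xyK := by
  rw [xyK, swapL_apply, liftK_alg]
  congr 1
  simp [swapA, mul_comm]

lemma smul_algL (a : ℚ) (q : R2) : algL (a • q) = a • algL q := map_smul _ _ _

lemma algL_mul (p q : R2) : algL (p * q) = algL p * algL q := by
  simp only [algL_apply, map_mul]
lemma xyK_ne : xyK ≠ 0 := by
  rw [xyK, map_mul]
  exact mul_ne_zero xK_ne yK_ne

lemma decomp (k : ℕ) (P : K2) (hP : P ∈ FSh (2*k+1)) :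
    ∃ c : ℚ, P - c • Ptil (2*k+1) ∈ FShPol (2*k+1) := by
  have hP' := hP
  rw [FSh, Submodule.mem_inf, Submodule.mem_inf] at hP'
  obtain ⟨⟨hhom, _⟩, hsw⟩ := hP'
  rw [Submodule.mem_comap, LinearMap.mulLeft_apply] at hhom
  obtain ⟨Q, hQh, hQe⟩ := hhom
  rw [ker_swap_iff] at hsw
  -- swapA Q = -Q
  have hswQ : swapA Q = -Q := by
    apply algL_inj
    have e1 : algL (swapA Q) = swapL (algL Q) := by
      rw [algL_apply, algL_apply, swapL_apply, liftK_alg]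
    have hsp : swapL P = -P := by linear_combination hsw
    rw [map_neg, e1, hQe, swapL_apply, map_mul, ← swapL_apply, ← swapL_apply,
      swapL_xyK, hsp]
    ring
  set N := 2*k+1 with hN
  set c : ℚ := MvPolynomial.coeff (Finsupp.single (0 : Fin 2) N) Q with hc
  have hc1 : MvPolynomial.coeff (Finsupp.single (1 : Fin 2) N) Q = -c := by
    have hmd : (Finsupp.single (0 : Fin 2) N).mapDomain (Equiv.swap (0 : Fin 2) 1)
        = Finsupp.single (1 : Fin 2) N := by
      rw [Finsupp.mapDomain_single, Equiv.swap_apply_left]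
    have := MvPolynomial.coeff_rename_mapDomain (Equiv.swap (0 : Fin 2) 1)
      (Equiv.injective _) Q (Finsupp.single 0 N)
    rw [hmd, ← swapA_rename, hswQ, MvPolynomial.coeff_neg] at this
    linarith
  refine ⟨c, ?_⟩
  set Q' : R2 := Q - c • Qt k with hQ'
  have hQ'h : Q' ∈ homogeneousSubmodule (Fin 2) ℚ N :=
    Submodule.sub_mem _ hQh (Submodule.smul_mem _ c (Qt_hom k))
  have h0 : MvPolynomial.coeff (Finsupp.single (0 : Fin 2) N) Q' = 0 := by
    rw [hQ', MvPolynomial.coeff_sub, MvPolynomial.coeff_smul, coeff_Qt_0, ← hc]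
    simp
  have h1 : MvPolynomial.coeff (Finsupp.single (1 : Fin 2) N) Q' = 0 := by
    rw [hQ', MvPolynomial.coeff_sub, MvPolynomial.coeff_smul, coeff_Qt_1, hc1]
    simp
  obtain ⟨S, hS⟩ := dvd_of_homog hQ'h h0 h1
  have hPS : P - c • Ptil N = algL S := by
    apply mul_left_cancel₀ xyK_ne
    rw [mul_sub, mul_smul_comm, ← hQe, hN, xy_Ptil k, ← algL_apply,
      ← smul_algL, ← map_sub, ← hQ', hS, algL_mul, algL_mul]
    rw [show algL (X 0) * algL (X 1) = xyK from by rw [← algL_mul]; rfl]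
  rw [FShPol, Submodule.mem_inf]
  constructor
  · exact Submodule.sub_mem _ hP (Submodule.smul_mem _ c (Ptil_mem k))
  · exact ⟨S, hPS.symm⟩
lemma inter_bot (k : ℕ) : FShPol (2*k+1) ⊓ Submodule.span ℚ {Ptil (2*k+1)} = ⊥ := by
  rw [eq_bot_iff]
  intro z hz
  rw [Submodule.mem_inf] at hz
  obtain ⟨hzp, hzs⟩ := hz
  rw [Submodule.mem_span_singleton] at hzs
  obtain ⟨a, ha⟩ := hzs
  rw [FShPol, Submodule.mem_inf] at hzp
  obtain ⟨-, q, hq⟩ := hzp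
  have key : (X (R:=ℚ) (0:Fin 2)) * X 1 * q = a • Qt k := by
    apply algL_inj
    rw [algL_mul, algL_mul, smul_algL,
      show algL (X 0) * algL (X 1) = xyK from by rw [← algL_mul]; rfl,
      hq, ← ha, mul_smul_comm, xy_Ptil k, algL_apply]
  have h0 := congrArg (MvPolynomial.coeff (Finsupp.single (0 : Fin 2) (2*k+1))) key
  rw [MvPolynomial.coeff_smul, coeff_Qt_0] at h0
  have hl : MvPolynomial.coeff (Finsupp.single (0 : Fin 2) (2*k+1))
      ((X (R:=ℚ) (0:Fin 2)) * X 1 * q) = 0 := by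
    rw [show (X (R:=ℚ) (0:Fin 2)) * X 1 * q = X 1 * (X 0 * q) from by ring]
    exact coeff_X1_mul_eq_zero (by simp [Finsupp.single_apply])
  rw [hl] at h0
  have ha0 : a = 0 := by simpa using h0.symm
  rw [← ha, ha0]
  simp only [Submodule.mem_bot]
  exact zero_smul ℚ (Ptil (2*k+1))

lemma homog_fd (N : ℕ) : FiniteDimensional ℚ (homogeneousSubmodule (Fin 2) ℚ N) := by
  have hle : homogeneousSubmodule (Fin 2) ℚ N ≤ restrictTotalDegree (Fin 2) ℚ N := by
    intro p hp
    rw [mem_restrictTotalDegree]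
    exact MvPolynomial.IsHomogeneous.totalDegree_le hp
  exact Submodule.finiteDimensional_of_le hle

lemma FSh_fd (N : ℕ) : FiniteDimensional ℚ (FSh N) := by
  haveI := homog_fd N
  haveI : FiniteDimensional ℚ (Submodule.map algL (homogeneousSubmodule (Fin 2) ℚ N)) :=
    Module.Finite.map _ _
  have hmem : ∀ z ∈ FSh N,
      (LinearMap.mulLeft ℚ xyK) z ∈ Submodule.map algL (homogeneousSubmodule (Fin 2) ℚ N) := by
    intro z hz
    rw [FSh, Submodule.mem_inf, Submodule.mem_inf] at hz
    exact Submodule.mem_comap.mp hz.1.1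
  set f := (LinearMap.mulLeft ℚ xyK).restrict hmem with hf
  apply FiniteDimensional.of_injective f
  intro a b hab
  apply Subtype.ext
  have : xyK * (a : K2) = xyK * (b : K2) := by
    have := congrArg (Subtype.val) hab
    simpa [hf, LinearMap.restrict_apply] using this
  exact mul_left_cancel₀ xyK_ne this
end FShAux

/-- For every odd `N ≥ 1`, the Fay-shuffle space `FSh₂(N)` is the internal direct sum
of its polynomial part and the line spanned by `P̃`; in particular
`dim FSh₂(N) = dim FSh₂(N)^pol + 1`. -/
theorem FSh_decomposition (N : ℕ) (hN : Odd N) (h1 : 1 ≤ N) :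
    FSh N = FShPol N ⊔ Submodule.span ℚ {Ptil N} ∧
    FShPol N ⊓ Submodule.span ℚ {Ptil N} = ⊥ ∧
    Module.finrank ℚ ↥(FSh N) = Module.finrank ℚ ↥(FShPol N) + 1 := by
  obtain ⟨k, hk⟩ := hN
  have hk' : N = 2*k+1 := by omega
  subst hk'
  have hsup : FSh (2*k+1) = FShPol (2*k+1) ⊔ Submodule.span ℚ {Ptil (2*k+1)} := by
    apply le_antisymm
    · intro P hP
      obtain ⟨c, hc⟩ := FShAux.decomp k P hP
      have hPe : P = (P - c • Ptil (2*k+1)) + c • Ptil (2*k+1) := by ring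
      rw [hPe]
      exact Submodule.add_mem _ (Submodule.mem_sup_left hc)
        (Submodule.mem_sup_right (Submodule.smul_mem _ c (Submodule.mem_span_singleton_self _)))
    · apply sup_le
      · exact inf_le_left
      · rw [Submodule.span_le, Set.singleton_subset_iff]
        exact FShAux.Ptil_mem k
  refine ⟨hsup, FShAux.inter_bot k, ?_⟩
  haveI := FShAux.FSh_fd (2*k+1)
  haveI : FiniteDimensional ℚ (FShPol (2*k+1)) :=
    Submodule.finiteDimensional_of_le (inf_le_left)
  have hr := Submodule.finrank_sup_add_finrank_inf_eq (FShPol (2*k+1))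
    (Submodule.span ℚ {Ptil (2*k+1)})
  rw [FShAux.inter_bot k, finrank_bot, finrank_span_singleton (FShAux.Ptil_ne k)] at hr
  rw [hsup]
  omega

end
end
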